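/- Fix an integer n ≥ 1 and reals ω₀ > 0, γ > 0. Let A be the 2(n+1) × 2(n+1) block matrix A = [[0, −Id_{n+1}], [ω₀² Id_{n+1} − Δ_N, 2γ Id_{n+1}]], and set μ_j = ω₀² + 4 sin²(π j/(2(n+1))) and ψ_j(x) = ((2 − δ_{0,j})/(n+1))^{1/2} cos(π j (2x+1)/(2(n+1))). Let λ ∈ ℂ satisfy λ² + 2γλ + μ_j ≠ 0 for every j = 0, …, n. Then λ·Id_{2(n+1)} + A is invertible and its inverse satisfies, for all x, y ∈ {0,…,n} (with indices of the blocks offset by n+1): [(λ + A)^{−1}]_{x+n+1, y+n+1} = Σ_{j=0}^n λ ψ_j(x) ψ_j(y)/(λ² + 2γλ + μ_j), [(λ + A)^{−1}]_{x, y+n+1} = Σ_{j=0}^n ψ_j(x) ψ_j(y)/(λ² + 2γλ + μ_j), and [(λ + A)^{−1}]_{x+n+1, y} = −Σ_{j=0}^n μ_j ψ_j(x) ψ_j(y)/(λ² + 2γλ + μ_j). -/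

import Mathlib

open Real Matrix

noncomputable section

/-- The matrix of the discrete Neumann Laplacian `Δ_N` on `{0,…,n}`. -/
def neumannLapMat (n : ℕ) : Matrix (Fin (n + 1)) (Fin (n + 1)) ℝ := fun x y =>
  (if (x : ℕ) = n then (if y = x then (1 : ℝ) else 0)
    else (if (y : ℕ) = (x : ℕ) + 1 then 1 else 0))
  + (if (x : ℕ) = 0 then (if y = x then 1 else 0)
    else (if (y : ℕ) + 1 = (x : ℕ) then 1 else 0))
  - 2 * (if y = x then 1 else 0)

/-- The drift matrix `A = [[0, −Id], [ω₀² Id − Δ_N, 2γ Id]]`. -/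
def driftA (n : ℕ) (ω₀ γ : ℝ) :
    Matrix (Fin (n + 1) ⊕ Fin (n + 1)) (Fin (n + 1) ⊕ Fin (n + 1)) ℝ :=
  Matrix.fromBlocks 0 (-1)
    (ω₀ ^ 2 • (1 : Matrix (Fin (n + 1)) (Fin (n + 1)) ℝ) - neumannLapMat n)
    ((2 * γ) • (1 : Matrix (Fin (n + 1)) (Fin (n + 1)) ℝ))

/-- The Neumann eigenvalues `μ_j = ω₀² + 4 sin²(πj/(2(n+1)))`. -/
def muN (n : ℕ) (ω₀ : ℝ) (j : ℕ) : ℝ :=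
  ω₀ ^ 2 + 4 * Real.sin (π * j / (2 * (n + 1))) ^ 2

/-- The Neumann eigenvectors `ψ_j(x) = ((2 − δ_{0,j})/(n+1))^{1/2} cos(πj(2x+1)/(2(n+1)))`. -/
def psiN (n j x : ℕ) : ℝ :=
  Real.sqrt ((2 - if j = 0 then 1 else 0) / (n + 1)) *
    Real.cos (π * j * (2 * x + 1) / (2 * (n + 1)))

lemma cos_int_pi (m : ℤ) : Real.cos (m * π) = if Even m then 1 else -1 := by
  rcases Int.even_or_odd m with ⟨k, hk⟩ | ⟨k, hk⟩
  · subst hk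
    rw [if_pos ⟨k, rfl⟩]
    have : ((k + k : ℤ) : ℝ) * π = (k : ℝ) * (2 * π) := by push_cast; ring
    rw [this, Real.cos_int_mul_two_pi]
  · subst hk
    rw [if_neg (by simp [Int.even_add_one, parity_simps])]
    have : ((2 * k + 1 : ℤ) : ℝ) * π = (k : ℝ) * (2 * π) + π := by push_cast; ring
    rw [this, Real.cos_int_mul_two_pi_add_pi]

lemma eps_cos_sum (n : ℕ) (α : ℝ) :
    (∑ j : Fin (n + 1), (2 - if (j : ℕ) = 0 then (1 : ℝ) else 0) * Real.cos (j * α))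
      * Real.sin (α / 2) = Real.sin ((n + 1 / 2) * α) := by
  have key : ∀ i : ℕ, 2 * Real.cos ((i + 1) * α) * Real.sin (α / 2)
      = Real.sin ((i + 1 + 1/2) * α) - Real.sin ((i + 1/2) * α) := by
    intro i
    rw [Real.sin_sub_sin]
    ring_nf
  rw [Fin.sum_univ_eq_sum_range (fun k : ℕ => (2 - if k = 0 then (1:ℝ) else 0) * Real.cos (k * α)), Finset.sum_range_succ']
  simp only [Nat.cast_zero, zero_mul, Real.cos_zero, if_pos rfl]
  rw [add_mul, Finset.sum_mul]
  have : ∀ i ∈ Finset.range n,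
      ((2 - if (i + 1 : ℕ) = 0 then (1:ℝ) else 0) * Real.cos ((i+1 : ℕ) * α)) * Real.sin (α/2)
      = Real.sin ((i + 1 + 1/2) * α) - Real.sin ((i + 1/2) * α) := by
    intro i _
    rw [if_neg (Nat.succ_ne_zero i), sub_zero]
    push_cast
    exact key i
  rw [Finset.sum_congr rfl this]
  have tele := Finset.sum_range_sub (fun i : ℕ => Real.sin ((i + 1/2) * α)) n
  simp only [Nat.cast_add, Nat.cast_one] at tele
  rw [tele]
  norm_num
  rw [show (1/2:ℝ)*α = α/2 by ring]
  ring

lemma eps_cos_sum_eval (n : ℕ) (m : ℤ) (hm : ¬ ((2 * ((n : ℤ) + 1)) ∣ m)) :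
    ∑ j : Fin (n + 1), (2 - if (j : ℕ) = 0 then (1 : ℝ) else 0)
        * Real.cos (π * j * m / (n + 1)) = if Even m then -1 else 1 := by
  set α : ℝ := π * m / (n + 1) with hα
  have hn1 : ((n : ℝ) + 1) ≠ 0 := by positivity
  have hαj : ∀ j : Fin (n + 1), π * (j : ℕ) * m / ((n : ℝ) + 1) = (j : ℕ) * α := by
    intro j; rw [hα]; ring
  have hs : Real.sin (α / 2) ≠ 0 := by
    intro h0
    obtain ⟨k, hk⟩ := Real.sin_eq_zero_iff.mp h0
    apply hm ⟨k, ?_⟩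
    rw [hα] at hk
    have hme : (m : ℝ) = 2 * ((n : ℝ) + 1) * k := by
      field_simp at hk
      nlinarith [Real.pi_ne_zero, Real.pi_pos, hk]
    exact_mod_cast hme
  have h1 := eps_cos_sum n α
  have h2 : ((n : ℝ) + 1 / 2) * α = m * π - α / 2 := by
    rw [hα]; field_simp; ring
  rw [h2, Real.sin_sub, Real.sin_int_mul_pi, cos_int_pi, zero_mul, zero_sub] at h1
  have h3 : (∑ j : Fin (n + 1), (2 - if (j : ℕ) = 0 then (1 : ℝ) else 0)
      * Real.cos (π * (j : ℕ) * m / ((n : ℝ) + 1))) * Real.sin (α / 2)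
      = (if Even m then (-1 : ℝ) else 1) * Real.sin (α / 2) := by
    simp_rw [hαj]
    rw [h1]
    split_ifs <;> ring
  exact mul_right_cancel₀ hs h3

lemma not_dvd_small (n : ℕ) (m : ℤ) (h0 : m ≠ 0) (h1 : m.natAbs < 2 * (n + 1)) :
    ¬ ((2 * ((n : ℤ) + 1)) ∣ m) := by
  intro h
  have h2 : (2 * ((n : ℤ) + 1)) ∣ |m| := (dvd_abs _ _).mpr h
  have h3 := Int.le_of_dvd (abs_pos.mpr h0) h2
  rw [Int.abs_eq_natAbs] at h3
  omega

lemma eps_sum (n : ℕ) :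
    ∑ j : Fin (n + 1), (2 - if (j : ℕ) = 0 then (1 : ℝ) else 0) = 2 * (n + 1) - 1 := by
  rw [Finset.sum_sub_distrib, Finset.sum_const]
  have : ∑ j : Fin (n + 1), (if (j : ℕ) = 0 then (1 : ℝ) else 0) = 1 := by
    have h : ∀ j : Fin (n + 1), ((j : ℕ) = 0) = (j = (0 : Fin (n + 1))) := by
      intro j; rw [Fin.ext_iff, Fin.val_zero]
    simp_rw [h]
    rw [Finset.sum_ite_eq' Finset.univ (0 : Fin (n + 1)) (fun _ => (1 : ℝ))]
    simp
  rw [this]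
  simp
  ring

lemma psiN_complete (n : ℕ) (x y : Fin (n + 1)) :
    ∑ j : Fin (n + 1), psiN n j x * psiN n j y = if x = y then 1 else 0 := by
  have hn1 : (0 : ℝ) < (n : ℝ) + 1 := by positivity
  have key : ∀ j : Fin (n + 1), psiN n j x * psiN n j y =
      ((2 - if (j : ℕ) = 0 then (1 : ℝ) else 0)
          * Real.cos (π * (j : ℕ) * ((((x : ℕ) : ℤ) - ((y : ℕ) : ℤ) : ℤ) : ℝ) / ((n : ℝ) + 1))
        + (2 - if (j : ℕ) = 0 then (1 : ℝ) else 0)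
          * Real.cos (π * (j : ℕ) * ((((x : ℕ) + (y : ℕ) + 1 : ℕ) : ℤ) : ℝ) / ((n : ℝ) + 1)))
      / (2 * ((n : ℝ) + 1)) := by
    intro j
    unfold psiN
    have he : (0 : ℝ) ≤ (2 - if (j : ℕ) = 0 then (1 : ℝ) else 0) / ((n : ℕ) + 1) := by
      split_ifs <;> positivity
    set a : ℝ := π * (j : ℕ) * (2 * (x : ℕ) + 1) / (2 * ((n : ℕ) + 1)) with ha
    set b : ℝ := π * (j : ℕ) * (2 * (y : ℕ) + 1) / (2 * ((n : ℕ) + 1)) with hb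
    have hsq : Real.sqrt ((2 - if (j : ℕ) = 0 then (1:ℝ) else 0) / ((n : ℕ) + 1)) * Real.cos a *
        (Real.sqrt ((2 - if (j : ℕ) = 0 then (1:ℝ) else 0) / ((n : ℕ) + 1)) * Real.cos b)
        = ((2 - if (j : ℕ) = 0 then (1:ℝ) else 0) / ((n : ℕ) + 1)) * (Real.cos a * Real.cos b) := by
      rw [show Real.sqrt ((2 - if (j : ℕ) = 0 then (1:ℝ) else 0) / ((n : ℕ) + 1)) * Real.cos a *
        (Real.sqrt ((2 - if (j : ℕ) = 0 then (1:ℝ) else 0) / ((n : ℕ) + 1)) * Real.cos b)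
        = (Real.sqrt ((2 - if (j : ℕ) = 0 then (1:ℝ) else 0) / ((n : ℕ) + 1)) *
           Real.sqrt ((2 - if (j : ℕ) = 0 then (1:ℝ) else 0) / ((n : ℕ) + 1))) *
          (Real.cos a * Real.cos b) from by ring, Real.mul_self_sqrt he]
    rw [hsq]
    have hcc : Real.cos (π * (j : ℕ) * ((((x : ℕ) : ℤ) - ((y : ℕ) : ℤ) : ℤ) : ℝ) / ((n : ℝ) + 1))
        + Real.cos (π * (j : ℕ) * ((((x : ℕ) + (y : ℕ) + 1 : ℕ) : ℤ) : ℝ) / ((n : ℝ) + 1))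
        = 2 * Real.cos a * Real.cos b := by
      rw [Real.cos_add_cos]
      have e1 : (π * (j : ℕ) * ((((x : ℕ) : ℤ) - ((y : ℕ) : ℤ) : ℤ) : ℝ) / ((n : ℝ) + 1)
          + π * (j : ℕ) * ((((x : ℕ) + (y : ℕ) + 1 : ℕ) : ℤ) : ℝ) / ((n : ℝ) + 1)) / 2 = a := by
        rw [ha]; push_cast; field_simp; ring
      have e2 : (π * (j : ℕ) * ((((x : ℕ) : ℤ) - ((y : ℕ) : ℤ) : ℤ) : ℝ) / ((n : ℝ) + 1)
          - π * (j : ℕ) * ((((x : ℕ) + (y : ℕ) + 1 : ℕ) : ℤ) : ℝ) / ((n : ℝ) + 1)) / 2 = -b := by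
        rw [hb]; push_cast; field_simp; ring
      rw [e1, e2, Real.cos_neg]
    have hne : ((n : ℝ) + 1) ≠ 0 := by positivity
    rw [show (2 - if (j : ℕ) = 0 then (1:ℝ) else 0)
          * Real.cos (π * (j : ℕ) * ((((x : ℕ) : ℤ) - ((y : ℕ) : ℤ) : ℤ) : ℝ) / ((n : ℝ) + 1))
        + (2 - if (j : ℕ) = 0 then (1:ℝ) else 0)
          * Real.cos (π * (j : ℕ) * ((((x : ℕ) + (y : ℕ) + 1 : ℕ) : ℤ) : ℝ) / ((n : ℝ) + 1))
        = (2 - if (j : ℕ) = 0 then (1:ℝ) else 0)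
          * (Real.cos (π * (j : ℕ) * ((((x : ℕ) : ℤ) - ((y : ℕ) : ℤ) : ℤ) : ℝ) / ((n : ℝ) + 1))
            + Real.cos (π * (j : ℕ) * ((((x : ℕ) + (y : ℕ) + 1 : ℕ) : ℤ) : ℝ) / ((n : ℝ) + 1)))
      from by ring, hcc]
    field_simp
  rw [Finset.sum_congr rfl (fun j _ => key j)]
  rw [← Finset.sum_div, Finset.sum_add_distrib]
  by_cases hxy : x = y
  · subst hxy
    rw [if_pos rfl]
    have hz : ((((x : ℕ) : ℤ) - ((x : ℕ) : ℤ) : ℤ) : ℝ) = 0 := by push_cast; ring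
    have hS1 : ∑ j : Fin (n + 1), (2 - if (j : ℕ) = 0 then (1 : ℝ) else 0)
        * Real.cos (π * (j : ℕ) * ((((x : ℕ) : ℤ) - ((x : ℕ) : ℤ) : ℤ) : ℝ) / ((n : ℝ) + 1))
        = 2 * (n + 1) - 1 := by
      simp_rw [hz, mul_zero, zero_div, Real.cos_zero, mul_one]
      exact eps_sum n
    have hm2 : ¬ ((2 * ((n : ℤ) + 1)) ∣ ((x : ℕ) + (x : ℕ) + 1 : ℕ)) :=
      not_dvd_small n _ (by positivity) (by have := x.is_lt; simp [Int.natAbs_natCast]; omega)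
    have hS2 := eps_cos_sum_eval n ((x : ℕ) + (x : ℕ) + 1 : ℕ) hm2
    rw [if_neg (by rw [Int.even_iff]; omega)] at hS2
    rw [hS1, hS2]
    field_simp
    ring
  · rw [if_neg hxy]
    have hne : ((x : ℕ) : ℤ) - ((y : ℕ) : ℤ) ≠ 0 := by
      have : (x : ℕ) ≠ (y : ℕ) := fun h => hxy (Fin.ext h)
      omega
    have hm1 : ¬ ((2 * ((n : ℤ) + 1)) ∣ (((x : ℕ) : ℤ) - ((y : ℕ) : ℤ))) :=
      not_dvd_small n _ hne (by have := x.is_lt; have := y.is_lt; omega)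
    have hm2 : ¬ ((2 * ((n : ℤ) + 1)) ∣ ((x : ℕ) + (y : ℕ) + 1 : ℕ)) :=
      not_dvd_small n _ (by positivity) (by have := x.is_lt; have := y.is_lt; simp [Int.natAbs_natCast]; omega)
    have hS1 := eps_cos_sum_eval n (((x : ℕ) : ℤ) - ((y : ℕ) : ℤ)) hm1
    have hS2 := eps_cos_sum_eval n ((x : ℕ) + (y : ℕ) + 1 : ℕ) hm2
    rw [hS1, hS2]
    rcases Int.even_or_odd (((x : ℕ) : ℤ) - ((y : ℕ) : ℤ)) with hE | hO
    · rw [if_pos hE, if_neg (by rw [Int.even_iff] at hE ⊢; omega)]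
      ring
    · rw [if_neg (by rw [Int.odd_iff] at hO; rw [Int.even_iff]; omega),
        if_pos (by rw [Int.odd_iff] at hO; rw [Int.even_iff]; omega)]
      ring

lemma lap_sum (n : ℕ) (f : ℕ → ℝ) (x : Fin (n + 1)) :
    ∑ z : Fin (n + 1), neumannLapMat n x z * f z
      = (if (x : ℕ) = n then f x else f ((x : ℕ) + 1))
        + (if (x : ℕ) = 0 then f x else f ((x : ℕ) - 1))
        - 2 * f x := by
  have h3 : ∑ z : Fin (n + 1), (2 * if z = x then (1:ℝ) else 0) * f (z : ℕ) = 2 * f (x : ℕ) := by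
    rw [Finset.sum_eq_single x]
    · simp
    · intro z _ hz; simp [if_neg hz]
    · simp
  have h1 : ∑ z : Fin (n + 1), (if (x : ℕ) = n then (if z = x then (1:ℝ) else 0)
      else (if (z : ℕ) = (x : ℕ) + 1 then 1 else 0)) * f (z : ℕ)
      = if (x : ℕ) = n then f (x : ℕ) else f ((x : ℕ) + 1) := by
    by_cases h : (x : ℕ) = n
    · simp only [if_pos h]
      rw [Finset.sum_eq_single x]
      · simp
      · intro z _ hz; simp [if_neg hz]
      · simp
    · simp only [if_neg h]
      have hlt : (x : ℕ) + 1 < n + 1 := by have := x.is_lt; omega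
      rw [Finset.sum_eq_single (⟨(x : ℕ) + 1, hlt⟩ : Fin (n + 1))]
      · simp
      · intro z _ hz
        rw [if_neg, zero_mul]
        intro hc
        exact hz (Fin.ext hc)
      · simp
  have h2 : ∑ z : Fin (n + 1), (if (x : ℕ) = 0 then (if z = x then (1:ℝ) else 0)
      else (if (z : ℕ) + 1 = (x : ℕ) then 1 else 0)) * f (z : ℕ)
      = if (x : ℕ) = 0 then f (x : ℕ) else f ((x : ℕ) - 1) := by
    by_cases h : (x : ℕ) = 0
    · simp only [if_pos h]
      rw [Finset.sum_eq_single x]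
      · simp
      · intro z _ hz; simp [if_neg hz]
      · simp
    · simp only [if_neg h]
      have hlt : (x : ℕ) - 1 < n + 1 := by have := x.is_lt; omega
      rw [Finset.sum_eq_single (⟨(x : ℕ) - 1, hlt⟩ : Fin (n + 1))]
      · rw [if_pos (show (x : ℕ) - 1 + 1 = (x : ℕ) by omega), one_mul]
      · intro z _ hz
        rw [if_neg, zero_mul]
        intro hc
        apply hz
        apply Fin.ext
        show (z : ℕ) = (x : ℕ) - 1
        omega
      · simp
  unfold neumannLapMat
  simp only [add_sub_assoc, add_mul, sub_mul]
  rw [Finset.sum_add_distrib]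
  rw [h1]
  rw [Finset.sum_sub_distrib, h2, h3]

lemma cos_rec (θ A : ℝ) :
    Real.cos (A + 2*θ) + Real.cos (A - 2*θ) - 2 * Real.cos A
      = -(4 * Real.sin θ ^ 2) * Real.cos A := by
  rw [Real.cos_add, Real.cos_sub, Real.cos_two_mul]
  linear_combination (4 * Real.cos A) * (Real.sin_sq_add_cos_sq θ)

lemma lap_psi (n : ℕ) (hn : 1 ≤ n) (j : Fin (n + 1)) (x : Fin (n + 1)) :
    ∑ z : Fin (n + 1), neumannLapMat n x z * psiN n j z
      = -(4 * Real.sin (π * (j : ℕ) / (2 * ((n : ℝ) + 1))) ^ 2) * psiN n j x := by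
  set θ : ℝ := π * (j : ℕ) / (2 * ((n : ℝ) + 1)) with hθ
  set c : ℝ := Real.sqrt ((2 - if (j : ℕ) = 0 then (1:ℝ) else 0) / ((n : ℝ) + 1)) with hc
  have hpsi : ∀ m : ℕ, psiN n j m = c * Real.cos (θ * (2 * (m : ℝ) + 1)) := by
    intro m
    unfold psiN
    rw [hc, hθ]
    congr 2
    push_cast
    ring
  rw [lap_sum n (psiN n j) x]
  simp only [hpsi]
  by_cases hx0 : (x : ℕ) = 0
  · have hxn : (x : ℕ) ≠ n := by omega
    rw [if_neg hxn, if_pos hx0, hx0]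
    have c1 : θ * (2 * ((0 + 1 : ℕ) : ℝ) + 1) = θ + 2 * θ := by push_cast; ring
    have c0 : θ * (2 * ((0 : ℕ) : ℝ) + 1) = θ := by push_cast; ring
    rw [c1, c0]
    have hneg : Real.cos (θ - 2*θ) = Real.cos θ := by
      rw [show θ - 2*θ = -θ by ring, Real.cos_neg]
    linear_combination c * cos_rec θ θ - c * hneg
  · rw [if_neg hx0]
    by_cases hxn : (x : ℕ) = n
    · rw [if_pos hxn, hxn]
      have hx1 : 1 ≤ n := hn
      have cn1 : θ * (2 * (((n - 1 : ℕ)) : ℝ) + 1) = θ * (2 * (n : ℝ) + 1) - 2 * θ := by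
        rw [Nat.cast_sub hx1]
        push_cast; ring
      rw [cn1]
      have hbn : Real.cos (θ * (2 * (n : ℝ) + 1) + 2 * θ) = Real.cos (θ * (2 * (n : ℝ) + 1)) := by
        have e1 : θ * (2 * (n : ℝ) + 1) + 2 * θ = (j : ℕ) * π + θ := by
          rw [hθ]; field_simp; ring
        have e2 : θ * (2 * (n : ℝ) + 1) = (j : ℕ) * π - θ := by
          rw [hθ]; field_simp; ring
        rw [e1, e2, Real.cos_add, Real.cos_sub, Real.sin_nat_mul_pi]
        ring
      linear_combination c * cos_rec θ (θ * (2 * (n : ℝ) + 1)) - c * hbn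
    · rw [if_neg hxn]
      have hx1 : 1 ≤ (x : ℕ) := by omega
      have c1 : θ * (2 * (((x : ℕ) + 1 : ℕ) : ℝ) + 1) = θ * (2 * ((x:ℕ) : ℝ) + 1) + 2 * θ := by
        push_cast; ring
      have c2 : θ * (2 * ((((x : ℕ) - 1 : ℕ)) : ℝ) + 1) = θ * (2 * ((x:ℕ) : ℝ) + 1) - 2 * θ := by
        rw [Nat.cast_sub hx1]
        push_cast; ring
      rw [c1, c2]
      linear_combination c * cos_rec θ (θ * (2 * ((x:ℕ) : ℝ) + 1))

lemma M_psi (n : ℕ) (hn : 1 ≤ n) (ω₀ : ℝ) (j : Fin (n + 1)) (x : Fin (n + 1)) :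
    ∑ z : Fin (n + 1),
        (ω₀ ^ 2 • (1 : Matrix (Fin (n+1)) (Fin (n+1)) ℝ) - neumannLapMat n) x z * psiN n j z
      = muN n ω₀ (j : ℕ) * psiN n j x := by
  have h1 : ∑ z : Fin (n + 1), (ω₀ ^ 2 • (1 : Matrix (Fin (n+1)) (Fin (n+1)) ℝ)) x z * psiN n j z
      = ω₀ ^ 2 * psiN n j x := by
    rw [Finset.sum_eq_single x]
    · simp [Matrix.smul_apply, Matrix.one_apply]
    · intro z _ hz
      simp [Matrix.smul_apply, Matrix.one_apply, Ne.symm hz]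
    · simp
  simp only [Matrix.sub_apply, sub_mul]
  rw [Finset.sum_sub_distrib, h1, lap_psi n hn j x]
  unfold muN
  push_cast
  ring

lemma neumannLapMat_symm (n : ℕ) (x y : Fin (n + 1)) :
    neumannLapMat n x y = neumannLapMat n y x := by
  unfold neumannLapMat
  have hx := x.is_lt
  have hy := y.is_lt
  simp only [Fin.ext_iff]
  split_ifs <;> first | omega | norm_num

def PsiC (n : ℕ) (j : Fin (n + 1)) : Matrix (Fin (n + 1)) (Fin (n + 1)) ℂ :=
  Matrix.of fun x y => ((psiN n j x : ℝ) : ℂ) * ((psiN n j y : ℝ) : ℂ)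

lemma sum_PsiC (n : ℕ) : ∑ j : Fin (n + 1), PsiC n j = 1 := by
  ext x y
  rw [Matrix.sum_apply]
  simp only [PsiC, Matrix.of_apply, Matrix.one_apply]
  have := psiN_complete n x y
  calc ∑ j : Fin (n+1), ((psiN n j x : ℝ) : ℂ) * ((psiN n j y : ℝ) : ℂ)
      = ((∑ j : Fin (n+1), psiN n j x * psiN n j y : ℝ) : ℂ) := by push_cast; rfl
    _ = if x = y then 1 else 0 := by rw [this]; split_ifs <;> simp

lemma Mc_mul_PsiC (n : ℕ) (hn : 1 ≤ n) (ω₀ : ℝ) (j : Fin (n + 1)) :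
    (ω₀ ^ 2 • (1 : Matrix (Fin (n+1)) (Fin (n+1)) ℝ) - neumannLapMat n).map Complex.ofReal
        * PsiC n j = ((muN n ω₀ (j : ℕ) : ℝ) : ℂ) • PsiC n j := by
  ext x y
  rw [Matrix.mul_apply]
  simp only [Matrix.map_apply, PsiC, Matrix.of_apply, Matrix.smul_apply, smul_eq_mul]
  have key := M_psi n hn ω₀ j x
  calc ∑ z, (((ω₀ ^ 2 • (1 : Matrix (Fin (n+1)) (Fin (n+1)) ℝ) - neumannLapMat n) x z : ℝ) : ℂ)
        * (((psiN n j z : ℝ) : ℂ) * ((psiN n j y : ℝ) : ℂ))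
      = ((∑ z, (ω₀ ^ 2 • (1 : Matrix (Fin (n+1)) (Fin (n+1)) ℝ) - neumannLapMat n) x z
          * psiN n j z : ℝ) : ℂ) * ((psiN n j y : ℝ) : ℂ) := by
        push_cast
        rw [Finset.sum_mul]
        exact Finset.sum_congr rfl fun z _ => by ring
    _ = ((muN n ω₀ (j : ℕ) : ℝ) : ℂ) * (((psiN n j x : ℝ) : ℂ) * ((psiN n j y : ℝ) : ℂ)) := by
        rw [key]; push_cast; ring

lemma PsiC_mul_Mc (n : ℕ) (hn : 1 ≤ n) (ω₀ : ℝ) (j : Fin (n + 1)) :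
    PsiC n j * (ω₀ ^ 2 • (1 : Matrix (Fin (n+1)) (Fin (n+1)) ℝ)
        - neumannLapMat n).map Complex.ofReal = ((muN n ω₀ (j : ℕ) : ℝ) : ℂ) • PsiC n j := by
  ext x y
  rw [Matrix.mul_apply]
  simp only [Matrix.map_apply, PsiC, Matrix.of_apply, Matrix.smul_apply, smul_eq_mul]
  have hsymm : ∀ z, (ω₀ ^ 2 • (1 : Matrix (Fin (n+1)) (Fin (n+1)) ℝ) - neumannLapMat n) z y
      = (ω₀ ^ 2 • (1 : Matrix (Fin (n+1)) (Fin (n+1)) ℝ) - neumannLapMat n) y z := by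
    intro z
    simp only [Matrix.sub_apply, Matrix.smul_apply, Matrix.one_apply, smul_eq_mul]
    rw [neumannLapMat_symm]
    congr 1
    by_cases h : z = y
    · rw [if_pos h, if_pos h.symm]
    · rw [if_neg h, if_neg (Ne.symm h)]
  have key := M_psi n hn ω₀ j y
  calc ∑ z : Fin (n+1), ((psiN n j x : ℝ) : ℂ) * ((psiN n j z : ℝ) : ℂ)
        * (((ω₀ ^ 2 • (1 : Matrix (Fin (n+1)) (Fin (n+1)) ℝ) - neumannLapMat n) z y : ℝ) : ℂ)
      = ((psiN n j x : ℝ) : ℂ) * ((∑ z, (ω₀ ^ 2 • (1 : Matrix (Fin (n+1)) (Fin (n+1)) ℝ)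
          - neumannLapMat n) y z * psiN n j z : ℝ) : ℂ) := by
        push_cast
        rw [Finset.mul_sum]
        refine Finset.sum_congr rfl fun z _ => ?_
        rw [hsymm z]
        push_cast
        ring
    _ = ((muN n ω₀ (j : ℕ) : ℝ) : ℂ) * (((psiN n j x : ℝ) : ℂ) * ((psiN n j y : ℝ) : ℂ)) := by
        rw [key]; push_cast; ring


/-- Explicit block entries of the resolvent `(λ + A)⁻¹` in terms of the
Neumann eigenbasis, for `λ` avoiding the characteristic roots `λ² + 2γλ + μ_j = 0`. -/
theorem driftA_resolvent_entries (n : ℕ) (hn : 1 ≤ n) (ω₀ γ : ℝ) (hω : 0 < ω₀) (hγ : 0 < γ)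
    (lam : ℂ)
    (hlam : ∀ j : Fin (n + 1), lam ^ 2 + 2 * (γ : ℂ) * lam + (muN n ω₀ (j : ℕ) : ℂ) ≠ 0) :
    IsUnit (lam • (1 : Matrix (Fin (n + 1) ⊕ Fin (n + 1)) (Fin (n + 1) ⊕ Fin (n + 1)) ℂ)
        + (driftA n ω₀ γ).map Complex.ofReal)
    ∧ ∀ x y : Fin (n + 1),
      ((lam • (1 : Matrix (Fin (n + 1) ⊕ Fin (n + 1)) (Fin (n + 1) ⊕ Fin (n + 1)) ℂ)
          + (driftA n ω₀ γ).map Complex.ofReal)⁻¹ (Sum.inr x) (Sum.inr y)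
        = ∑ j : Fin (n + 1),
            lam * (psiN n j x : ℂ) * (psiN n j y : ℂ) /
              (lam ^ 2 + 2 * (γ : ℂ) * lam + (muN n ω₀ (j : ℕ) : ℂ)))
      ∧ ((lam • (1 : Matrix (Fin (n + 1) ⊕ Fin (n + 1)) (Fin (n + 1) ⊕ Fin (n + 1)) ℂ)
          + (driftA n ω₀ γ).map Complex.ofReal)⁻¹ (Sum.inl x) (Sum.inr y)
        = ∑ j : Fin (n + 1),
            (psiN n j x : ℂ) * (psiN n j y : ℂ) /
              (lam ^ 2 + 2 * (γ : ℂ) * lam + (muN n ω₀ (j : ℕ) : ℂ)))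
      ∧ ((lam • (1 : Matrix (Fin (n + 1) ⊕ Fin (n + 1)) (Fin (n + 1) ⊕ Fin (n + 1)) ℂ)
          + (driftA n ω₀ γ).map Complex.ofReal)⁻¹ (Sum.inr x) (Sum.inl y)
        = -∑ j : Fin (n + 1),
            (muN n ω₀ (j : ℕ) : ℂ) * (psiN n j x : ℂ) * (psiN n j y : ℂ) /
              (lam ^ 2 + 2 * (γ : ℂ) * lam + (muN n ω₀ (j : ℕ) : ℂ))) := by
  classical
  set Mc : Matrix (Fin (n+1)) (Fin (n+1)) ℂ :=
    (ω₀ ^ 2 • (1 : Matrix (Fin (n+1)) (Fin (n+1)) ℝ) - neumannLapMat n).map Complex.ofReal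
    with hMcdef
  set d : Fin (n+1) → ℂ :=
    fun j => lam ^ 2 + 2 * (γ : ℂ) * lam + ((muN n ω₀ (j : ℕ) : ℝ) : ℂ) with hd
  set S : Matrix (Fin (n+1)) (Fin (n+1)) ℂ := ∑ j : Fin (n+1), (d j)⁻¹ • PsiC n j with hSdef
  have hMS : Mc * S = ∑ j : Fin (n+1), (((muN n ω₀ (j : ℕ) : ℝ) : ℂ) * (d j)⁻¹) • PsiC n j := by
    rw [hSdef, Finset.mul_sum]
    refine Finset.sum_congr rfl fun j _ => ?_
    rw [Matrix.mul_smul, hMcdef, Mc_mul_PsiC n hn ω₀ j, smul_smul, mul_comm]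
  have hSM : S * Mc = ∑ j : Fin (n+1), (((muN n ω₀ (j : ℕ) : ℝ) : ℂ) * (d j)⁻¹) • PsiC n j := by
    rw [hSdef, Finset.sum_mul]
    refine Finset.sum_congr rfl fun j _ => ?_
    rw [Matrix.smul_mul, hMcdef, PsiC_mul_Mc n hn ω₀ j, smul_smul, mul_comm]
  have hcomm : S * Mc = Mc * S := by rw [hMS, hSM]
  have hmain : (lam ^ 2 + 2 * (γ : ℂ) * lam) • S + Mc * S = 1 := by
    rw [hMS, hSdef, Finset.smul_sum, ← Finset.sum_add_distrib, ← sum_PsiC n]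
    refine Finset.sum_congr rfl fun j _ => ?_
    rw [smul_smul, ← add_smul]
    rw [show (lam ^ 2 + 2 * (γ : ℂ) * lam) * (d j)⁻¹
        + ((muN n ω₀ (j : ℕ) : ℝ) : ℂ) * (d j)⁻¹ = d j * (d j)⁻¹ by rw [hd]; ring]
    rw [mul_inv_cancel₀ (hlam j), one_smul]
  set lc : ℂ := lam + 2 * (γ : ℂ) with hlc
  set D : Matrix (Fin (n + 1) ⊕ Fin (n + 1)) (Fin (n + 1) ⊕ Fin (n + 1)) ℂ :=
    lam • 1 + (driftA n ω₀ γ).map Complex.ofReal with hDdef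
  have hD : D = Matrix.fromBlocks (lam • 1) (-1) Mc (lc • 1) := by
    rw [hDdef]
    unfold driftA
    rw [Matrix.fromBlocks_map]
    have h0 : ((0 : Matrix (Fin (n+1)) (Fin (n+1)) ℝ)).map Complex.ofReal = 0 := by
      ext i k; simp
    have hneg1 : ((-1 : Matrix (Fin (n+1)) (Fin (n+1)) ℝ)).map Complex.ofReal = -1 := by
      ext i k
      simp [Matrix.map_apply, Matrix.neg_apply, Matrix.one_apply, apply_ite]
    have h2γ : (((2 * γ) • (1 : Matrix (Fin (n+1)) (Fin (n+1)) ℝ)).map Complex.ofReal)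
        = (2 * (γ : ℂ)) • 1 := by
      ext i k
      simp only [Matrix.map_apply, Matrix.smul_apply, Matrix.one_apply, smul_eq_mul]
      split_ifs <;> simp
    rw [h0, hneg1, h2γ, ← hMcdef]
    rw [show lam • (1 : Matrix (Fin (n + 1) ⊕ Fin (n + 1)) (Fin (n + 1) ⊕ Fin (n + 1)) ℂ)
        = Matrix.fromBlocks (lam • 1) 0 0 (lam • 1) by
      rw [← Matrix.fromBlocks_one, Matrix.fromBlocks_smul]
      simp]
    rw [Matrix.fromBlocks_add, add_zero, zero_add, zero_add, hlc, add_smul]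
  set B : Matrix (Fin (n + 1) ⊕ Fin (n + 1)) (Fin (n + 1) ⊕ Fin (n + 1)) ℂ :=
    Matrix.fromBlocks (lc • S) S (-(Mc * S)) (lam • S) with hB
  have hDB : D * B = 1 := by
    rw [hD, hB, Matrix.fromBlocks_multiply]
    have TL : (lam • 1) * (lc • S) + (-1) * (-(Mc * S)) = (1 : Matrix (Fin (n+1)) (Fin (n+1)) ℂ) := by
      rw [Matrix.smul_mul, one_mul, smul_smul, neg_one_mul, neg_neg,
        show lam * lc = lam ^ 2 + 2 * (γ : ℂ) * lam by rw [hlc]; ring]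
      exact hmain
    have TR : (lam • 1) * S + (-1) * (lam • S) = (0 : Matrix (Fin (n+1)) (Fin (n+1)) ℂ) := by
      rw [Matrix.smul_mul, one_mul, neg_one_mul, add_neg_cancel]
    have BL : Mc * (lc • S) + (lc • 1) * (-(Mc * S)) = (0 : Matrix (Fin (n+1)) (Fin (n+1)) ℂ) := by
      rw [Matrix.mul_smul, Matrix.smul_mul, one_mul, smul_neg, add_neg_cancel]
    have BR : Mc * S + (lc • 1) * (lam • S) = (1 : Matrix (Fin (n+1)) (Fin (n+1)) ℂ) := by
      rw [Matrix.smul_mul, one_mul, smul_smul,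
        show lc * lam = lam ^ 2 + 2 * (γ : ℂ) * lam by rw [hlc]; ring, add_comm (Mc * S)]
      exact hmain
    rw [TL, TR, BL, BR, Matrix.fromBlocks_one]
  have hBD : B * D = 1 := by
    rw [hD, hB, Matrix.fromBlocks_multiply]
    have TL : (lc • S) * (lam • 1) + S * Mc = (1 : Matrix (Fin (n+1)) (Fin (n+1)) ℂ) := by
      rw [Matrix.mul_smul, mul_one, smul_smul, hcomm,
        show lam * lc = lam ^ 2 + 2 * (γ : ℂ) * lam by rw [hlc]; ring]
      exact hmain
    have TR : (lc • S) * (-1) + S * (lc • 1) = (0 : Matrix (Fin (n+1)) (Fin (n+1)) ℂ) := by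
      rw [Matrix.mul_smul, mul_one, mul_neg_one, neg_add_cancel]
    have BL : (-(Mc * S)) * (lam • 1) + (lam • S) * Mc = (0 : Matrix (Fin (n+1)) (Fin (n+1)) ℂ) := by
      rw [Matrix.mul_smul, mul_one, Matrix.smul_mul, hcomm, smul_neg, neg_add_cancel]
    have BR : (-(Mc * S)) * (-1) + (lam • S) * (lc • 1) = (1 : Matrix (Fin (n+1)) (Fin (n+1)) ℂ) := by
      rw [Matrix.mul_smul, mul_one, mul_neg_one, neg_neg, smul_smul,
        show lc * lam = lam ^ 2 + 2 * (γ : ℂ) * lam by rw [hlc]; ring, add_comm (Mc * S)]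
      exact hmain
    rw [TL, TR, BL, BR, Matrix.fromBlocks_one]
  have hUnit : IsUnit D := ⟨⟨D, B, hDB, hBD⟩, rfl⟩
  have hInv : D⁻¹ = B := Matrix.inv_eq_right_inv hDB
  have hSapp : ∀ x y : Fin (n+1), S x y
      = ∑ j : Fin (n+1), (d j)⁻¹ * ((psiN n j x : ℂ) * (psiN n j y : ℂ)) := by
    intro x y
    rw [hSdef, Matrix.sum_apply]
    exact Finset.sum_congr rfl fun j _ => by
      rw [Matrix.smul_apply, smul_eq_mul]; rfl
  refine ⟨hUnit, fun x y => ⟨?_, ?_, ?_⟩⟩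
  · rw [hInv, hB, Matrix.fromBlocks_apply₂₂, Matrix.smul_apply, smul_eq_mul, hSapp,
      Finset.mul_sum]
    refine Finset.sum_congr rfl fun j _ => ?_
    simp only [hd, div_eq_mul_inv]
    ring
  · rw [hInv, hB, Matrix.fromBlocks_apply₁₂, hSapp]
    refine Finset.sum_congr rfl fun j _ => ?_
    simp only [hd, div_eq_mul_inv]
    ring
  · rw [hInv, hB, Matrix.fromBlocks_apply₂₁, Matrix.neg_apply, hMS, Matrix.sum_apply, neg_inj]
    refine Finset.sum_congr rfl fun j _ => ?_
    rw [Matrix.smul_apply, smul_eq_mul]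
    simp only [PsiC, Matrix.of_apply, hd, div_eq_mul_inv]
    ring

end
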